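/- For any σ ∈ Sₙ, let σ^∨ = σ₁σ₃σ₅⋯σ₆σ₄σ₂ (odd-indexed entries in order, followed by even-indexed entries in reverse order). Then î(σ) = inv(σ^∨), the number of ordinary inversions of σ^∨. -/

import Mathlib

open Finset
open scoped Classical

/-- entry of a permutation of `Fin n` at 0-indexed position `i` (0-based values). -/
def ent {n : ℕ} (σ : Equiv.Perm (Fin n)) (i : ℕ) : ℕ :=
  if h : i < n then (σ ⟨i, h⟩ : ℕ) else 0

/-- the triple `(a, b, c)` of distinct values, reduced to a permutation in `S₃`, is odd. -/
def odd3 (a b c : ℕ) : Prop :=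
  ((if b < a then 1 else 0) + (if c < a then 1 else 0) + (if c < b then 1 else 0)) % 2 = 1

instance (a b c : ℕ) : Decidable (odd3 a b c) := by
  unfold odd3; infer_instance

/-- 3-descent set, 0-indexed positions (position `i` here is paper position `i+1`). -/
def D3 {n : ℕ} (σ : Equiv.Perm (Fin n)) : Finset ℕ :=
  (Finset.range (n - 2)).filter (fun i => odd3 (ent σ i) (ent σ (i + 1)) (ent σ (i + 2)))

/-- alternating descent set, 0-indexed positions. -/
def altD {n : ℕ} (σ : Equiv.Perm (Fin n)) : Finset ℕ :=
  (Finset.range (n - 1)).filter (fun i =>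
    (Even i ∧ ent σ (i + 1) < ent σ i) ∨ (¬ Even i ∧ ent σ i < ent σ (i + 1)))

/-- number of up-down alternating permutations of `[n]` (the Euler number `Eₙ`). -/
noncomputable def EulerNum (n : ℕ) : ℕ :=
  ((Finset.univ : Finset (Equiv.Perm (Fin n))).filter (fun τ =>
    ∀ i ∈ Finset.range (n - 1),
      (Even i ∧ ent τ i < ent τ (i + 1)) ∨ (¬ Even i ∧ ent τ (i + 1) < ent τ i))).card

/-- `c³ᵢ(σ)`, 0-indexed: number of `j > i+1` with `σᵢ σᵢ₊₁ σⱼ` odd. -/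
def c3 {n : ℕ} (σ : Equiv.Perm (Fin n)) (i : ℕ) : ℕ :=
  ((Finset.range n).filter (fun j => i + 1 < j ∧ odd3 (ent σ i) (ent σ (i + 1)) (ent σ j))).card

/-- `ĉᵢ(σ)`, 0-indexed. -/
def chat {n : ℕ} (σ : Equiv.Perm (Fin n)) (i : ℕ) : ℕ :=
  ((Finset.range n).filter (fun j => i < j ∧
    ((Even i ∧ ent σ j < ent σ i) ∨ (¬ Even i ∧ ent σ i < ent σ j)))).card

/-- `i₃` of an arbitrary word `f 0, f 1, ..., f (m-1)`. -/
def i3f (m : ℕ) (f : ℕ → ℕ) : ℕ :=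
  ((Finset.range m ×ˢ Finset.range m).filter (fun p =>
    p.1 + 1 < p.2 ∧ odd3 (f p.1) (f (p.1 + 1)) (f p.2))).card

/-- the 3-inversion statistic `i₃`. -/
def i3 {n : ℕ} (σ : Equiv.Perm (Fin n)) : ℕ := i3f n (ent σ)

/-- the word `1*σ` (0-based values): `0, σ₀+1, σ₁+1, ...`. -/
def oneStar {n : ℕ} (σ : Equiv.Perm (Fin n)) : ℕ → ℕ :=
  fun i => if i = 0 then 0 else ent σ (i - 1) + 1

/-- number of alternating inversions `î(σ)`. -/
def altInv {n : ℕ} (σ : Equiv.Perm (Fin n)) : ℕ :=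
  ((Finset.range n ×ˢ Finset.range n).filter (fun p => p.1 < p.2 ∧
    ((Even p.1 ∧ ent σ p.2 < ent σ p.1) ∨ (¬ Even p.1 ∧ ent σ p.1 < ent σ p.2)))).card

/-- number of inversions of the word `f 0, ..., f (m-1)`. -/
def invf (m : ℕ) (f : ℕ → ℕ) : ℕ :=
  ((Finset.range m ×ˢ Finset.range m).filter (fun p => p.1 < p.2 ∧ f p.2 < f p.1)).card

/-- major index of the word `f 0, ..., f (m-1)` (descent at 0-indexed `i` contributes `i+1`). -/
def majf (m : ℕ) (f : ℕ → ℕ) : ℕ :=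
  ∑ i ∈ (Finset.range (m - 1)).filter (fun i => f (i + 1) < f i), (i + 1)

/-- `Â(m, r)`: number of permutations of `[m]` with `r - 1` alternating descents. -/
def Ahat (m r : ℕ) : ℕ :=
  ((Finset.univ : Finset (Equiv.Perm (Fin m))).filter (fun σ => (altD σ).card + 1 = r)).card

/-- down-up alternating: `σ₁ > σ₂ < σ₃ > ⋯`. -/
def DownUp {n : ℕ} (σ : Equiv.Perm (Fin n)) : Prop :=
  ∀ i ∈ Finset.range (n - 1),
    (Even i ∧ ent σ (i + 1) < ent σ i) ∨ (¬ Even i ∧ ent σ i < ent σ (i + 1))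

instance {n : ℕ} (σ : Equiv.Perm (Fin n)) : Decidable (DownUp σ) := by
  unfold DownUp; infer_instance

/-- up-down alternating: `σ₁ < σ₂ > σ₃ < ⋯`. -/
def UpDown {n : ℕ} (σ : Equiv.Perm (Fin n)) : Prop :=
  ∀ i ∈ Finset.range (n - 1),
    (Even i ∧ ent σ i < ent σ (i + 1)) ∨ (¬ Even i ∧ ent σ (i + 1) < ent σ i)

/-- the word `σ^∨ = σ₁σ₃σ₅⋯σ₆σ₄σ₂`. -/
def vee {n : ℕ} (σ : Equiv.Perm (Fin n)) : ℕ → ℕ :=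
  fun k => if 2 * k < n then ent σ (2 * k) else ent σ (2 * (n - k) - 1)

/- auxiliary -/
def phiD (n i : ℕ) : ℕ := if Even i then i / 2 else n - (i + 1) / 2
def psiD (n k : ℕ) : ℕ := if 2 * k < n then 2 * k else 2 * (n - k) - 1

lemma psi_phi {n i : ℕ} (hi : i < n) : psiD n (phiD n i) = i := by
  rcases Nat.even_or_odd i with he | ho
  · have h0 : i % 2 = 0 := Nat.even_iff.mp he
    simp only [phiD, psiD, if_pos he]
    split <;> omega
  · have h1 : i % 2 = 1 := Nat.odd_iff.mp ho
    simp only [phiD, psiD, if_neg (by simpa [Nat.even_iff] using h1 : ¬ Even i)]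
    split <;> omega

lemma phi_psi {n k : ℕ} (hk : k < n) : phiD n (psiD n k) = k := by
  unfold psiD phiD
  by_cases h : 2 * k < n
  · rw [if_pos h, if_pos ⟨k, two_mul k⟩]; omega
  · rw [if_neg h, if_neg (by rw [Nat.even_iff]; omega)]; omega

lemma phi_lt {n i : ℕ} (hi : i < n) : phiD n i < n := by
  unfold phiD
  rcases Nat.even_or_odd i with he | ho
  · rw [if_pos he]; omega
  · rw [if_neg (by simpa [Nat.even_iff] using Nat.odd_iff.mp ho)]
    have := Nat.odd_iff.mp ho; omega

lemma psi_lt {n k : ℕ} (hk : k < n) : psiD n k < n := by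
  unfold psiD; split <;> omega

lemma vee_eq {n : ℕ} (σ : Equiv.Perm (Fin n)) (k : ℕ) :
    vee σ k = ent σ (psiD n k) := by
  unfold vee psiD; split <;> rfl

lemma vee_phi {n : ℕ} (σ : Equiv.Perm (Fin n)) {i : ℕ} (hi : i < n) :
    vee σ (phiD n i) = ent σ i := by
  rw [vee_eq, psi_phi hi]

lemma phi_lt_phi {n i j : ℕ} (hj : j < n) (hij : i < j) (he : Even i) :
    phiD n i < phiD n j := by
  have h0 : i % 2 = 0 := Nat.even_iff.mp he
  unfold phiD
  rw [if_pos he]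
  rcases Nat.even_or_odd j with he2 | ho2
  · rw [if_pos he2]; have := Nat.even_iff.mp he2; omega
  · rw [if_neg (by simpa [Nat.even_iff] using Nat.odd_iff.mp ho2)]
    have := Nat.odd_iff.mp ho2; omega

lemma phi_gt_phi {n i j : ℕ} (hj : j < n) (hij : i < j) (he : ¬ Even i) :
    phiD n j < phiD n i := by
  have h1 : i % 2 = 1 := Nat.odd_iff.mp (Nat.not_even_iff_odd.mp he)
  unfold phiD
  rw [if_neg he]
  rcases Nat.even_or_odd j with he2 | ho2
  · rw [if_pos he2]; have := Nat.even_iff.mp he2; omega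
  · rw [if_neg (by simpa [Nat.even_iff] using Nat.odd_iff.mp ho2)]
    have := Nat.odd_iff.mp ho2; omega


theorem stmt9 (n : ℕ) (σ : Equiv.Perm (Fin n)) :
    altInv σ = invf n (vee σ) := by
  unfold altInv invf
  refine Finset.card_nbij'
    (fun p => if phiD n p.1 < phiD n p.2 then (phiD n p.1, phiD n p.2)
      else (phiD n p.2, phiD n p.1))
    (fun q => if psiD n q.1 < psiD n q.2 then (psiD n q.1, psiD n q.2)
      else (psiD n q.2, psiD n q.1)) ?_ ?_ ?_ ?_
  · rintro p hp
    obtain ⟨i, j⟩ := p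
    simp only [Finset.mem_coe, Finset.mem_filter, Finset.mem_product, Finset.mem_range] at hp ⊢
    obtain ⟨⟨hi, hj⟩, hij, hcond⟩ := hp
    rcases hcond with ⟨he, hlt⟩ | ⟨he, hlt⟩
    · rw [if_pos (phi_lt_phi hj hij he)]
      exact ⟨⟨phi_lt hi, phi_lt hj⟩, phi_lt_phi hj hij he,
        by rw [vee_phi σ hi, vee_phi σ hj]; exact hlt⟩
    · rw [if_neg (by have := phi_gt_phi hj hij he; omega)]
      exact ⟨⟨phi_lt hj, phi_lt hi⟩, phi_gt_phi hj hij he,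
        by rw [vee_phi σ hi, vee_phi σ hj]; exact hlt⟩
  · rintro q hq
    obtain ⟨k, l⟩ := q
    simp only [Finset.mem_coe, Finset.mem_filter, Finset.mem_product, Finset.mem_range] at hq ⊢
    obtain ⟨⟨hk, hl⟩, hkl, hlt⟩ := hq
    rw [vee_eq, vee_eq] at hlt
    have hψk := psi_lt hk
    have hψl := psi_lt hl
    have par : ∀ m < n, (2 * m < n → Even (psiD n m)) ∧ (¬ (2 * m < n) → ¬ Even (psiD n m)) := by
      intro m hm
      constructor <;> intro h
      · unfold psiD; rw [if_pos h]; exact ⟨m, two_mul m⟩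
      · unfold psiD; rw [if_neg h, Nat.even_iff]; omega
    by_cases hord : psiD n k < psiD n l
    · rw [if_pos hord]
      refine ⟨⟨hψk, hψl⟩, hord, ?_⟩
      by_cases h2k : 2 * k < n
      · exact Or.inl ⟨(par k hk).1 h2k, hlt⟩
      · exfalso
        have h2l : ¬ 2 * l < n := by omega
        unfold psiD at hord
        rw [if_neg h2k, if_neg h2l] at hord
        omega
    · rw [if_neg hord]
      have hne : psiD n k ≠ psiD n l := fun h =>
        absurd (by rw [← phi_psi hk, h, phi_psi hl]) (Nat.ne_of_lt hkl)
      refine ⟨⟨hψl, hψk⟩, by omega, ?_⟩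
      by_cases h2l : 2 * l < n
      · exfalso
        have h2k : 2 * k < n := by omega
        unfold psiD at hord
        rw [if_pos h2k, if_pos h2l] at hord
        omega
      · exact Or.inr ⟨(par l hl).2 h2l, hlt⟩
  · rintro p hp
    obtain ⟨i, j⟩ := p
    simp only [Finset.mem_coe, Finset.mem_filter, Finset.mem_product, Finset.mem_range] at hp
    obtain ⟨⟨hi, hj⟩, hij, -⟩ := hp
    dsimp only
    by_cases h : phiD n i < phiD n j
    · rw [if_pos h]; simp only [psi_phi hi, psi_phi hj, if_pos hij]
    · rw [if_neg h]; simp only [psi_phi hi, psi_phi hj, if_neg (by omega : ¬ j < i)]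
  · rintro q hq
    obtain ⟨k, l⟩ := q
    simp only [Finset.mem_coe, Finset.mem_filter, Finset.mem_product, Finset.mem_range] at hq
    obtain ⟨⟨hk, hl⟩, hkl, -⟩ := hq
    dsimp only
    by_cases h : psiD n k < psiD n l
    · rw [if_pos h]; simp only [phi_psi hk, phi_psi hl, if_pos hkl]
    · rw [if_neg h]; simp only [phi_psi hk, phi_psi hl, if_neg (by omega : ¬ l < k)]
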